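/- Let J(θ) = Σⱼ F(θⱼ) with F a weakly convex sparsity inducing function with parameter ζ > 0, let l be the empirical logistic loss with centered data (Σᵢ x⁽ⁱ⁾ = 0), and set s = Σ_{i: y⁽ⁱ⁾=1} x⁽ⁱ⁾. If β > ‖s‖_∞ / F'₊(0), then 0 is a local minimum of θ ↦ l(θ) + βJ(θ). -/

import Mathlib

open scoped RealInnerProductSpace BigOperators Classical

noncomputable def logisticLoss {d N : ℕ} (x : Fin N → EuclideanSpace ℝ (Fin d))
    (y : Fin N → ℝ) (θ : EuclideanSpace ℝ (Fin d)) : ℝ :=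
  ∑ i, (Real.log (1 + Real.exp ⟪θ, x i⟫) - y i * ⟪θ, x i⟫)

lemma aux_log (a : ℝ) : Real.log 2 + a / 2 ≤ Real.log (1 + Real.exp a) := by
  have he : Real.exp a = Real.exp (a / 2) ^ 2 := by
    rw [sq, ← Real.exp_add]; ring_nf
  have h1 : 2 * Real.exp (a / 2) ≤ 1 + Real.exp a := by
    nlinarith [sq_nonneg (1 - Real.exp (a / 2)), Real.exp_pos (a / 2)]
  calc Real.log 2 + a / 2 = Real.log (2 * Real.exp (a / 2)) := by
        rw [Real.log_mul (by norm_num) (Real.exp_ne_zero _), Real.log_exp]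
    _ ≤ Real.log (1 + Real.exp a) := Real.log_le_log (by positivity) h1

lemma convex_lower {H : ℝ → ℝ} (hH : ConvexOn ℝ Set.univ H) {D : ℝ}
    (hderiv : HasDerivWithinAt H D (Set.Ici 0) 0) {u : ℝ} (hu : 0 < u) :
    H 0 + D * u ≤ H u := by
  have htend : Filter.Tendsto (slope H 0) (nhdsWithin 0 (Set.Ici 0 \ {0})) (nhds D) :=
    hasDerivWithinAt_iff_tendsto_slope.mp hderiv
  rw [Set.Ici_sdiff_left] at htend
  have hle : D ≤ slope H 0 u := by
    refine le_of_tendsto htend ?_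
    filter_upwards [Ioo_mem_nhdsGT_of_mem (Set.left_mem_Ico.mpr hu)] with v hv
    have := hH.secant_mono (Set.mem_univ 0) (Set.mem_univ v) (Set.mem_univ u)
      (ne_of_gt hv.1) (ne_of_gt hu) (le_of_lt hv.2)
    simpa [slope_def_field] using this
  rw [slope_def_field] at hle
  have := (le_div_iff₀ (by simpa using hu)).mp (by simpa using hle)
  linarith [this]

theorem zero_isLocalMin_of_beta_large {d N : ℕ}
    (x : Fin N → EuclideanSpace ℝ (Fin d)) (y : Fin N → ℝ)
    (hy : ∀ i, y i = 0 ∨ y i = 1)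
    (hcentered : ∑ i, x i = 0)
    (F : ℝ → ℝ) (ζ : ℝ) (hζ : 0 < ζ)
    (hnonneg : ∀ t, 0 ≤ F t)
    (heven : ∀ t, F (-t) = F t)
    (h0 : F 0 = 0)
    (hmono : MonotoneOn F (Set.Ici 0))
    (hratio : AntitoneOn (fun t => F t / t) (Set.Ioi 0))
    (hH : ConvexOn ℝ Set.univ (fun t => F t + ζ * t ^ 2))
    (D : ℝ) (hderiv : HasDerivWithinAt F D (Set.Ici 0) 0) (hD : 0 < D)
    (β : ℝ)
    (hβ : β > ‖(fun j => (∑ i ∈ Finset.univ.filter (fun i => y i = 1), x i) j :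
        Fin d → ℝ)‖ / D) :
    IsLocalMin (fun θ : EuclideanSpace ℝ (Fin d) =>
      logisticLoss x y θ + β * ∑ j, F (θ j)) 0 := by
  classical
  set s : Fin d → ℝ :=
    (fun j => (∑ i ∈ Finset.univ.filter (fun i => y i = 1), x i) j) with hsdef
  have hβD : ‖s‖ < β * D := by
    have h := (div_lt_iff₀ hD).mp hβ
    linarith
  have hβpos : 0 < β := lt_of_le_of_lt (div_nonneg (norm_nonneg _) hD.le) hβ
  have hβζ : 0 < β * ζ := mul_pos hβpos hζ
  set δ : ℝ := (β * D - ‖s‖) / (β * ζ) with hδdef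
  have hδpos : 0 < δ := div_pos (by linarith) hβζ
  have hkey : β * (D - ζ * δ) = ‖s‖ := by
    field_simp [hδdef]
    have e : β * ζ * δ = β * D - ‖s‖ := by rw [hδdef]; field_simp
    linarith
  -- derivative of the convexified function at 0 from the right
  have hH' : HasDerivWithinAt (fun t => F t + ζ * t ^ 2) D (Set.Ici 0) 0 := by
    have h2 : HasDerivAt (fun t : ℝ => ζ * t ^ 2) (ζ * (2 * (0:ℝ) ^ 1)) 0 :=
      (hasDerivAt_pow 2 (0:ℝ)).const_mul ζ
    have h3 := hderiv.add h2.hasDerivWithinAt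
    simp at h3
    exact h3
  -- lower bound on F near 0
  have hFlow : ∀ t : ℝ, |t| ≤ δ → (D - ζ * δ) * |t| ≤ F t := by
    intro t ht
    have habs : F |t| = F t := by
      rcases abs_cases t with ⟨h, _⟩ | ⟨h, _⟩
      · rw [h]
      · rw [h, heven]
    rcases eq_or_lt_of_le (abs_nonneg t) with h | h
    · rw [← h]
      simpa [← h] using hnonneg t
    · have hc := convex_lower hH hH' h
      simp only [h0] at hc
      nlinarith [hc, habs, h, ht,
        mul_nonneg (mul_nonneg hζ.le (sub_nonneg.mpr ht)) (abs_nonneg t)]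
  -- inner product expansion
  have hinner : ∀ (θ v : EuclideanSpace ℝ (Fin d)), ⟪θ, v⟫ = ∑ j, θ j * v j := by
    intro θ v
    simp [PiLp.inner_apply, RCLike.inner_apply]
    exact Finset.sum_congr rfl fun j _ => mul_comm _ _
  -- column sums
  have hcol : ∀ j, ∑ i, (1/2 - y i) * x i j = - s j := by
    intro j
    have h1 : ∑ i, x i j = 0 := by
      have := congrArg (fun v : EuclideanSpace ℝ (Fin d) => v j) hcentered
      simpa [Finset.sum_apply] using
        this
    have h2 : ∑ i, y i * x i j = s j := by
      rw [hsdef]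
      simp only
      rw [WithLp.ofLp_sum, Finset.sum_apply j _ (fun i => (x i).ofLp), Finset.sum_filter]
      apply Finset.sum_congr rfl
      intro i _
      rcases hy i with h | h <;> simp [h]
    have : ∑ i, (1/2 - y i) * x i j
        = (1/2) * ∑ i, x i j - ∑ i, y i * x i j := by
      rw [Finset.mul_sum, ← Finset.sum_sub_distrib]
      apply Finset.sum_congr rfl
      intro i _
      ring
    rw [this, h1, h2]
    ring
  have hcoord : ∀ (θ : EuclideanSpace ℝ (Fin d)) (j : Fin d), |θ j| ≤ ‖θ‖ := by
    intro θ j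
    rw [EuclideanSpace.norm_eq, ← Real.sqrt_sq_eq_abs]
    apply Real.sqrt_le_sqrt
    calc θ j ^ 2 = ‖θ j‖ ^ 2 := by rw [Real.norm_eq_abs, sq_abs]
      _ ≤ ∑ i, ‖θ i‖ ^ 2 := Finset.single_le_sum (f := fun i => ‖θ i‖ ^ 2)
          (fun i _ => by positivity) (Finset.mem_univ j)
  have hsj : ∀ j, |s j| ≤ ‖s‖ := by
    intro j
    simpa [Real.norm_eq_abs] using norm_le_pi_norm s j
  -- the neighborhood
  filter_upwards [Metric.ball_mem_nhds (0 : EuclideanSpace ℝ (Fin d)) hδpos] with θ hθ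
  have hθnorm : ‖θ‖ < δ := by simpa [Metric.mem_ball] using hθ
  -- value at 0
  have hzero : logisticLoss x y 0 + β * ∑ j, F ((0 : EuclideanSpace ℝ (Fin d)) j)
      = ∑ _i : Fin N, Real.log 2 := by
    have : ∀ i, Real.log (1 + Real.exp ⟪(0 : EuclideanSpace ℝ (Fin d)), x i⟫)
        - y i * ⟪(0 : EuclideanSpace ℝ (Fin d)), x i⟫ = Real.log 2 := by
      intro i
      rw [inner_zero_left]
      norm_num
    rw [logisticLoss, Finset.sum_congr rfl (fun i _ => this i)]
    simp [h0]
  -- lower bound of the loss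
  have hlog : ∑ i, (Real.log 2 + (1/2 - y i) * ⟪θ, x i⟫) ≤ logisticLoss x y θ := by
    apply Finset.sum_le_sum
    intro i _
    have h := aux_log ⟪θ, x i⟫
    have hr : (1/2 - y i) * ⟪θ, x i⟫ = ⟪θ, x i⟫ / 2 - y i * ⟪θ, x i⟫ := by ring
    rw [hr]
    linarith
  -- rewrite the linear term
  have hid : ∑ i, (1/2 - y i) * ⟪θ, x i⟫ = ∑ j, θ j * (- s j) := by
    have hterm : ∀ i, (1/2 - y i) * ⟪θ, x i⟫ = ∑ j, θ j * ((1/2 - y i) * x i j) := by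
      intro i
      rw [hinner θ (x i), Finset.mul_sum]
      apply Finset.sum_congr rfl
      intro j _
      ring
    rw [Finset.sum_congr rfl (fun i _ => hterm i), Finset.sum_comm]
    apply Finset.sum_congr rfl
    intro j _
    rw [← Finset.mul_sum, hcol j]
  -- lower bound of the penalty
  have hpen : ‖s‖ * ∑ j, |θ j| ≤ β * ∑ j, F (θ j) := by
    have h1 : ∀ j, (D - ζ * δ) * |θ j| ≤ F (θ j) := by
      intro j
      exact hFlow (θ j) (le_of_lt (lt_of_le_of_lt (hcoord θ j) hθnorm))
    calc ‖s‖ * ∑ j, |θ j| = β * ((D - ζ * δ) * ∑ j, |θ j|) := by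
          rw [← mul_assoc, hkey]
      _ = β * ∑ j, (D - ζ * δ) * |θ j| := by rw [Finset.mul_sum]
      _ ≤ β * ∑ j, F (θ j) := by
          apply mul_le_mul_of_nonneg_left _ hβpos.le
          exact Finset.sum_le_sum fun j _ => h1 j
  -- the linear term is dominated
  have hdom : 0 ≤ (∑ j, θ j * (- s j)) + ‖s‖ * ∑ j, |θ j| := by
    rw [Finset.mul_sum, ← Finset.sum_add_distrib]
    apply Finset.sum_nonneg
    intro j _
    have h1 : |θ j * s j| = |θ j| * |s j| := abs_mul _ _
    have h2 : -(θ j * s j) ≥ -|θ j * s j| := neg_le_neg (le_abs_self _)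
    have h3 := hsj j
    have h4 := abs_nonneg (θ j)
    nlinarith
  -- assemble
  show logisticLoss x y 0 + β * ∑ j, F ((0 : EuclideanSpace ℝ (Fin d)) j)
      ≤ logisticLoss x y θ + β * ∑ j, F (θ j)
  rw [hzero]
  rw [Finset.sum_add_distrib, hid] at hlog
  linarith [hlog, hpen, hdom]
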